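/- Let n ≥ 1 and let Λ be the exterior algebra over ℚ on generators α₁, β₁, …, α_{2n}, β_{2n}, with P_i := α_i ∧ β_i and D_{rs} := α_r ∧ β_s − β_r ∧ α_s. Then every product P_{i₁} ∧ ⋯ ∧ P_{i_p} ∧ D_{j₁k₁} ∧ ⋯ ∧ D_{j_qk_q} with p + q = n and i₁, …, i_p, j₁, …, j_q, k₁, …, k_q pairwise distinct elements of {1, …, 2n} lies in the ℚ-linear span of the Gelfand–Zetlin monomials, i.e., the products P_{i'_1} ∧ ⋯ ∧ P_{i'_{p'}} ∧ D_{j'_1k'_1} ∧ ⋯ ∧ D_{j'_{q'}k'_{q'}} with p' + q' = n, pairwise distinct indices, and j'_1 < ⋯ < j'_{q'}, k'_1 < ⋯ < k'_{q'}, j'_r < k'_r for all r. -/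

import Mathlib

/-- The generator `α_i` (for `i` in `{1, …, 2n}`) of the exterior algebra over `ℚ` on the
free module with basis `α₁, β₁, …, α_{2n}, β_{2n}`: the image under `ι` of the `i`-th
standard basis vector of `Fin (4n) → ℚ`. -/
noncomputable def egAlpha (n : ℕ) (i : Fin (2 * n)) :
    ExteriorAlgebra ℚ (Fin (4 * n) → ℚ) :=
  ExteriorAlgebra.ι ℚ (Pi.single (Fin.castLE (by omega) i) 1)

/-- The generator `β_i`: the image under `ι` of the `(2n + i)`-th standard basis vector. -/
noncomputable def egBeta (n : ℕ) (i : Fin (2 * n)) :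
    ExteriorAlgebra ℚ (Fin (4 * n) → ℚ) :=
  ExteriorAlgebra.ι ℚ (Pi.single (⟨2 * n + i.val, by have := i.isLt; omega⟩ : Fin (4 * n)) 1)

/-- The class `P_i := α_i ∧ β_i` of the divisor `P_i = {x_i = 0}` on `E^{2n}`. -/
noncomputable def egP (n : ℕ) (i : Fin (2 * n)) : ExteriorAlgebra ℚ (Fin (4 * n) → ℚ) :=
  egAlpha n i * egBeta n i

/-- The class `D_{ij} := α_i ∧ β_j − β_i ∧ α_j` of the divisor `D_{ij} = P_i + P_j − Δ_{ij}`. -/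
noncomputable def egD (n : ℕ) (i j : Fin (2 * n)) : ExteriorAlgebra ℚ (Fin (4 * n) → ℚ) :=
  egAlpha n i * egBeta n j - egBeta n i * egAlpha n j


/-- Index data for a Gelfand–Zetlin monomial
`P_{i₁} ∧ ⋯ ∧ P_{i_p} ∧ D_{j₁k₁} ∧ ⋯ ∧ D_{j_qk_q}` with `p + q = n`: the indices
`i₁ < ⋯ < i_p, j₁, …, j_q, k₁, …, k_q` are pairwise distinct elements of `{1, …, 2n}` and
satisfy the Gelfand–Zetlin condition `j₁ < ⋯ < j_q`, `k₁ < ⋯ < k_q`, `j_r < k_r`. -/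
structure GZIndex (n : ℕ) where
  p : ℕ
  q : ℕ
  hpq : p + q = n
  i : Fin p → Fin (2 * n)
  j : Fin q → Fin (2 * n)
  k : Fin q → Fin (2 * n)
  imono : StrictMono i
  jmono : StrictMono j
  kmono : StrictMono k
  hjk : ∀ r, j r < k r
  hdistinct : Function.Injective (Sum.elim i (Sum.elim j k))

/-- The Gelfand–Zetlin monomial `P_{i₁} ∧ ⋯ ∧ P_{i_p} ∧ D_{j₁k₁} ∧ ⋯ ∧ D_{j_qk_q}`
attached to the index data `idx`. -/
noncomputable def gzMonomial (n : ℕ) (idx : GZIndex n) :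
    ExteriorAlgebra ℚ (Fin (4 * n) → ℚ) :=
  (List.ofFn fun r : Fin idx.p => egP n (idx.i r)).prod *
    (List.ofFn fun r : Fin idx.q => egD n (idx.j r) (idx.k r)).prod

namespace EGAux


open ExteriorAlgebra List

abbrev Lam (n : ℕ) := ExteriorAlgebra ℚ (Fin (4 * n) → ℚ)

noncomputable def egDp (n : ℕ) (x : Fin (2 * n) × Fin (2 * n)) : Lam n := egD n x.1 x.2

@[simp] theorem egDp_mk (n : ℕ) (a b : Fin (2 * n)) : egDp n (a, b) = egD n a b := rfl

theorem ianti {n : ℕ} (v w : Fin (4 * n) → ℚ) :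
    ι ℚ v * ι ℚ w = -((ι ℚ w : Lam n) * ι ℚ v) :=
  eq_neg_of_add_eq_zero_left (ι_add_mul_swap v w)

section Generic
variable {R : Type*} [Ring R] {I : Type*} [LinearOrder I]

theorem swap1 (x : I → R) (h : ∀ i j : I, x i * x j = -(x j * x i))
    (i j : I) (_hij : j < i) : x i * x j = -(x j * x i) := h i j

theorem swap2 (x : I → R) (h : ∀ i j : I, x i * x j = -(x j * x i))
    (i j : I) (z : R) (_hij : j < i) : x i * (x j * z) = -(x j * (x i * z)) := by
  rw [← mul_assoc, h i j, neg_mul, mul_assoc]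

theorem comm_pairs (x : ℕ → R) (h : ∀ i j : ℕ, x i * x j = -(x j * x i)) :
    x 0 * x 1 * (x 2 * x 3) = x 2 * x 3 * (x 0 * x 1) := by
  simp only [mul_assoc]
  simp (config := { decide := true }) only [swap1 x h, swap2 x h, mul_neg, neg_neg]

theorem plucker_generic (x : ℕ → R) (h : ∀ i j : ℕ, x i * x j = -(x j * x i)) :
    (x 0 * x 7 - x 1 * x 6) * (x 2 * x 5 - x 3 * x 4)
      + (x 0 * x 5 - x 1 * x 4) * (x 2 * x 7 - x 3 * x 6)
      + (x 0 * x 3 - x 1 * x 2) * (x 4 * x 7 - x 5 * x 6) = 0 := by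
  simp only [sub_eq_add_neg, mul_add, add_mul, mul_assoc, mul_neg, neg_mul, neg_neg, neg_add]
  simp (config := { decide := true }) only [swap1 x h, swap2 x h, mul_neg, neg_neg]
  abel
end Generic

variable {n : ℕ}

theorem commute_ii (u1 u2 v1 v2 : Fin (4 * n) → ℚ) :
    Commute (ι ℚ u1 * ι ℚ u2 : Lam n) (ι ℚ v1 * ι ℚ v2) := by
  have := comm_pairs (R := Lam n)
    (fun m => ι ℚ (match m with | 0 => u1 | 1 => u2 | 2 => v1 | 3 => v2 | _ => 0))
    (fun i j => ianti _ _)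
  exact this

theorem commute_sub (u v : Lam n)
    (hu : ∃ a b c d, u = ι ℚ a * ι ℚ b - ι ℚ c * ι ℚ d)
    (hv : ∃ a b c d, v = ι ℚ a * ι ℚ b - ι ℚ c * ι ℚ d) : Commute u v := by
  obtain ⟨a, b, c, d, rfl⟩ := hu
  obtain ⟨a', b', c', d', rfl⟩ := hv
  exact ((commute_ii a b a' b').sub_right (commute_ii a b c' d')).sub_left
    ((commute_ii c d a' b').sub_right (commute_ii c d c' d'))

theorem isSub_egP (a : Fin (2 * n)) :
    ∃ x y z w, egP n a = ι ℚ x * ι ℚ y - ι ℚ z * ι ℚ w := by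
  refine ⟨Pi.single (Fin.castLE (by omega) a) 1,
    Pi.single (⟨2 * n + a.val, by have := a.isLt; omega⟩ : Fin (4 * n)) 1, 0, 0, ?_⟩
  simp [egP, egAlpha, egBeta]

theorem isSub_egDp (x : Fin (2 * n) × Fin (2 * n)) :
    ∃ a b c d, egDp n x = ι ℚ a * ι ℚ b - ι ℚ c * ι ℚ d :=
  ⟨_, _, _, _, rfl⟩

theorem egD_symm (a b : Fin (2 * n)) : egD n a b = egD n b a := by
  unfold egD
  rw [show egBeta n a * egAlpha n b = -(egAlpha n b * egBeta n a) from ianti _ _,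
      show egBeta n b * egAlpha n a = -(egAlpha n a * egBeta n b) from ianti _ _]
  abel

theorem egD_plucker (a b c d : Fin (2 * n)) :
    egD n a d * egD n b c = -(egD n a c * egD n b d) - egD n a b * egD n c d := by
  have h := plucker_generic (R := Lam n)
    (fun m => ι ℚ (match m with
      | 0 => Pi.single (Fin.castLE (by omega) a) 1
      | 1 => Pi.single (⟨2 * n + a.val, by have := a.isLt; omega⟩ : Fin (4 * n)) 1
      | 2 => Pi.single (Fin.castLE (by omega) b) 1
      | 3 => Pi.single (⟨2 * n + b.val, by have := b.isLt; omega⟩ : Fin (4 * n)) 1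
      | 4 => Pi.single (Fin.castLE (by omega) c) 1
      | 5 => Pi.single (⟨2 * n + c.val, by have := c.isLt; omega⟩ : Fin (4 * n)) 1
      | 6 => Pi.single (Fin.castLE (by omega) d) 1
      | _ => Pi.single (⟨2 * n + d.val, by have := d.isLt; omega⟩ : Fin (4 * n)) 1))
    (fun i j => ianti _ _)
  have h2 : egD n a d * egD n b c + (egD n a c * egD n b d + egD n a b * egD n c d) = 0 := by
    rw [← add_assoc]; exact h
  rw [eq_neg_of_add_eq_zero_left h2, neg_add, ← sub_eq_add_neg]

/-! ### Combinatorial layer -/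

noncomputable def TT (n : ℕ) (is : List (Fin (2 * n))) (ps : List (Fin (2 * n) × Fin (2 * n))) :
    Lam n :=
  (is.map (egP n)).prod * (ps.map (egDp n)).prod

def muP {n : ℕ} (x : Fin (2 * n) × Fin (2 * n)) : ℕ :=
  (x.2.val - x.1.val) ^ 2 + (x.1.val - x.2.val) ^ 2

def mu {n : ℕ} (ps : List (Fin (2 * n) × Fin (2 * n))) : ℕ := (ps.map muP).sum

def RD {n : ℕ} (x y : Fin (2 * n) × Fin (2 * n)) : Prop :=
  x.1 ≠ y.1 ∧ x.1 ≠ y.2 ∧ x.2 ≠ y.1 ∧ x.2 ≠ y.2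

theorem RD_symm {n : ℕ} : ∀ {x y : Fin (2 * n) × Fin (2 * n)}, RD x y → RD y x := by
  rintro x y ⟨h1, h2, h3, h4⟩; exact ⟨h1.symm, h3.symm, h2.symm, h4.symm⟩

def DistE {n : ℕ} (is : List (Fin (2 * n))) (ps : List (Fin (2 * n) × Fin (2 * n))) : Prop :=
  is.Nodup ∧ (∀ x ∈ ps, x.1 ≠ x.2 ∧ x.1 ∉ is ∧ x.2 ∉ is) ∧ ps.Pairwise RD

theorem pw_of_forall {α : Type*} {R : α → α → Prop} :
    ∀ {l : List α}, (∀ a ∈ l, ∀ b ∈ l, R a b) → l.Pairwise R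
  | [], _ => List.Pairwise.nil
  | x :: t, h => by
    refine List.pairwise_cons.2 ⟨fun b hb => h x (by simp) b (by simp [hb]), ?_⟩
    exact pw_of_forall fun a ha b hb => h a (by simp [ha]) b (by simp [hb])

theorem factor_cond {n : ℕ} (is : List (Fin (2 * n))) (ps : List (Fin (2 * n) × Fin (2 * n)))
    (u : Lam n) (hu : u ∈ is.map (egP n) ++ ps.map (egDp n)) :
    ∃ a b c d, u = ExteriorAlgebra.ι ℚ a * ExteriorAlgebra.ι ℚ b -
      ExteriorAlgebra.ι ℚ c * ExteriorAlgebra.ι ℚ d := by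
  rcases List.mem_append.1 hu with h | h <;> obtain ⟨v, _, rfl⟩ := List.mem_map.1 h
  · exact isSub_egP v
  · exact isSub_egDp v

theorem pw_commute {n : ℕ} (is : List (Fin (2 * n))) (ps : List (Fin (2 * n) × Fin (2 * n))) :
    (is.map (egP n) ++ ps.map (egDp n)).Pairwise Commute :=
  pw_of_forall fun a ha b hb =>
    commute_sub a b (factor_cond is ps a ha) (factor_cond is ps b hb)

theorem pwP {n : ℕ} (is : List (Fin (2 * n))) : (is.map (egP n)).Pairwise Commute := by
  have := pw_commute is ([] : List (Fin (2 * n) × Fin (2 * n)))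
  simpa using this

theorem pwD {n : ℕ} (ps : List (Fin (2 * n) × Fin (2 * n))) :
    (ps.map (egDp n)).Pairwise Commute := by
  have := pw_commute ([] : List (Fin (2 * n))) ps
  simpa using this

theorem TT_perm {n : ℕ} {is is' : List (Fin (2 * n))} {ps ps' : List (Fin (2 * n) × Fin (2 * n))}
    (h1 : is ~ is') (h2 : ps ~ ps') : TT n is ps = TT n is' ps' := by
  unfold TT
  rw [List.Perm.prod_eq' (h1.map _) (pwP is), List.Perm.prod_eq' (h2.map _) (pwD ps)]

theorem DistE_perm {n : ℕ} {is : List (Fin (2 * n))} {ps ps' : List (Fin (2 * n) × Fin (2 * n))}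
    (hp : ps ~ ps') (h : DistE is ps) : DistE is ps' :=
  ⟨h.1, fun x hx => h.2.1 x (hp.mem_iff.2 hx), h.2.2.perm hp fun hxy => RD_symm hxy⟩

theorem not_chain'_decomp {α : Type*} {R : α → α → Prop} :
    ∀ (l : List α), ¬ l.Chain' R → ∃ l1 x y l2, l = l1 ++ x :: y :: l2 ∧ ¬ R x y
  | [], h => absurd List.isChain_nil h
  | [a], h => absurd (List.isChain_singleton a) h
  | a :: b :: t, h => by
    by_cases hab : R a b
    · have h2 : ¬ (b :: t).Chain' R := fun hc => h (List.isChain_cons_cons.2 ⟨hab, hc⟩)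
      obtain ⟨l1, x, y, l2, heq, hxy⟩ := not_chain'_decomp (b :: t) h2
      exact ⟨a :: l1, x, y, l2, by rw [List.cons_append, ← heq], hxy⟩
    · exact ⟨[], a, b, t, rfl, hab⟩

theorem mu_ineq1 {pa pb pc pd : ℕ} (h1 : pa < pb) (h2 : pb < pc) (h3 : pc < pd) :
    (pc - pa) ^ 2 + (pa - pc) ^ 2 + ((pd - pb) ^ 2 + (pb - pd) ^ 2) <
      (pd - pa) ^ 2 + (pa - pd) ^ 2 + ((pc - pb) ^ 2 + (pb - pc) ^ 2) := by
  obtain ⟨A, rfl⟩ : ∃ A, pb = pa + A + 1 := ⟨pb - pa - 1, by omega⟩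
  obtain ⟨B, rfl⟩ : ∃ B, pc = pa + A + 1 + B + 1 := ⟨pc - pa - A - 2, by omega⟩
  obtain ⟨C, rfl⟩ : ∃ C, pd = pa + A + 1 + B + 1 + C + 1 := ⟨pd - pa - A - B - 3, by omega⟩
  rw [show pa + A + 1 + B + 1 - pa = A + B + 2 by omega, show pa - (pa + A + 1 + B + 1) = 0 by omega,
    show pa + A + 1 + B + 1 + C + 1 - (pa + A + 1) = B + C + 2 by omega,
    show pa + A + 1 - (pa + A + 1 + B + 1 + C + 1) = 0 by omega,
    show pa + A + 1 + B + 1 + C + 1 - pa = A + B + C + 3 by omega,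
    show pa - (pa + A + 1 + B + 1 + C + 1) = 0 by omega,
    show pa + A + 1 + B + 1 - (pa + A + 1) = B + 1 by omega,
    show pa + A + 1 - (pa + A + 1 + B + 1) = 0 by omega]
  nlinarith [sq_nonneg (A + B + C), sq_nonneg B]

theorem mu_ineq2 {pa pb pc pd : ℕ} (h1 : pa < pb) (h2 : pb < pc) (h3 : pc < pd) :
    (pb - pa) ^ 2 + (pa - pb) ^ 2 + ((pd - pc) ^ 2 + (pc - pd) ^ 2) <
      (pd - pa) ^ 2 + (pa - pd) ^ 2 + ((pc - pb) ^ 2 + (pb - pc) ^ 2) := by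
  obtain ⟨A, rfl⟩ : ∃ A, pb = pa + A + 1 := ⟨pb - pa - 1, by omega⟩
  obtain ⟨B, rfl⟩ : ∃ B, pc = pa + A + 1 + B + 1 := ⟨pc - pa - A - 2, by omega⟩
  obtain ⟨C, rfl⟩ : ∃ C, pd = pa + A + 1 + B + 1 + C + 1 := ⟨pd - pa - A - B - 3, by omega⟩
  rw [show pa + A + 1 - pa = A + 1 by omega, show pa - (pa + A + 1) = 0 by omega,
    show pa + A + 1 + B + 1 + C + 1 - (pa + A + 1 + B + 1) = C + 1 by omega,
    show pa + A + 1 + B + 1 - (pa + A + 1 + B + 1 + C + 1) = 0 by omega,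
    show pa + A + 1 + B + 1 + C + 1 - pa = A + B + C + 3 by omega,
    show pa - (pa + A + 1 + B + 1 + C + 1) = 0 by omega,
    show pa + A + 1 + B + 1 - (pa + A + 1) = B + 1 by omega,
    show pa + A + 1 - (pa + A + 1 + B + 1) = 0 by omega]
  nlinarith [sq_nonneg (A + B + C), sq_nonneg B]

theorem TT_plucker {n : ℕ} (is : List (Fin (2 * n))) (r : List (Fin (2 * n) × Fin (2 * n)))
    (a b c d : Fin (2 * n)) :
    TT n is ((a, d) :: (b, c) :: r) =
      -(TT n is ((a, c) :: (b, d) :: r)) - TT n is ((a, b) :: (c, d) :: r) := by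
  unfold TT
  simp only [List.map_cons, List.prod_cons, egDp_mk]
  rw [← mul_assoc (egD n a d) (egD n b c), egD_plucker a b c d]
  simp only [sub_mul, neg_mul, mul_sub, mul_neg, mul_assoc]



theorem gz_case {n : ℕ} (is : List (Fin (2 * n))) (ps : List (Fin (2 * n) × Fin (2 * n)))
    (hlen : is.length + ps.length = n)
    (hsort : is.Pairwise (· < ·))
    (hfst : ps.Pairwise (fun x y => x.1 < y.1))
    (hsnd : ps.Pairwise (fun x y => x.2 < y.2))
    (hpp : ∀ x ∈ ps, x.1 < x.2)
    (hdist : DistE is ps) :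
    TT n is ps ∈ Set.range (gzMonomial n) := by
  have hgetI : Function.Injective is.get := List.nodup_iff_injective_get.1 hdist.1
  have hmemP : ∀ r : Fin ps.length, ps.get r ∈ ps := fun r => List.get_mem _ _
  have hRD : ∀ (r s : Fin ps.length), r ≠ s → RD (ps.get r) (ps.get s) := by
    intro r s hrs
    rcases lt_or_gt_of_ne hrs with h | h
    · exact List.pairwise_iff_get.1 hdist.2.2 r s h
    · exact RD_symm (List.pairwise_iff_get.1 hdist.2.2 s r h)
  refine ⟨⟨is.length, ps.length, hlen, is.get, fun r => (ps.get r).1, fun r => (ps.get r).2,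
    hsort.sortedLT.strictMono_get, ?_, ?_, ?_, ?_⟩, ?_⟩
  · intro r s hrs; exact List.pairwise_iff_get.1 hfst r s hrs
  · intro r s hrs; exact List.pairwise_iff_get.1 hsnd r s hrs
  · intro r; exact hpp _ (hmemP r)
  · rintro (r | r | r) (s | s | s) h <;>
      simp only [Sum.elim_inl, Sum.elim_inr] at h
    · exact congrArg Sum.inl (hgetI h)
    · exact absurd (h ▸ List.get_mem _ _) (hdist.2.1 _ (hmemP s)).2.1
    · exact absurd (h ▸ List.get_mem _ _) (hdist.2.1 _ (hmemP s)).2.2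
    · exact absurd (by rw [h]; exact List.get_mem _ _) (hdist.2.1 _ (hmemP r)).2.1
    · by_cases hrs : r = s
      · exact congrArg (Sum.inr ∘ Sum.inl) hrs
      · exact absurd h (hRD r s hrs).1
    · by_cases hrs : r = s
      · exact absurd (hrs ▸ h) (hdist.2.1 _ (hmemP r)).1
      · exact absurd h (hRD r s hrs).2.1
    · exact absurd (by rw [h]; exact List.get_mem _ _) (hdist.2.1 _ (hmemP r)).2.2
    · by_cases hrs : r = s
      · exact absurd (hrs ▸ h).symm (hdist.2.1 _ (hmemP s)).1
      · exact absurd h (hRD r s hrs).2.2.1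
    · by_cases hrs : r = s
      · exact congrArg (Sum.inr ∘ Sum.inr) hrs
      · exact absurd h (hRD r s hrs).2.2.2
  · show gzMonomial n _ = TT n is ps
    unfold gzMonomial TT
    congr 1
    · rw [show (fun r : Fin is.length => egP n (is.get r)) = egP n ∘ is.get from rfl,
        ← List.map_ofFn, List.ofFn_get]
    · rw [show (fun r : Fin ps.length => egD n (ps.get r).1 (ps.get r).2) = egDp n ∘ ps.get
        from rfl, ← List.map_ofFn, List.ofFn_get]


theorem DistE_permL {n : ℕ} {is is' : List (Fin (2 * n))} {ps : List (Fin (2 * n) × Fin (2 * n))}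
    (h : is ~ is') (hd : DistE is ps) : DistE is' ps :=
  ⟨h.nodup_iff.1 hd.1,
   fun x hx => ⟨(hd.2.1 x hx).1, fun hm => (hd.2.1 x hx).2.1 (h.mem_iff.2 hm),
     fun hm => (hd.2.1 x hx).2.2 (h.mem_iff.2 hm)⟩, hd.2.2⟩

theorem DistE_plucker {n : ℕ} {is : List (Fin (2 * n))} {r : List (Fin (2 * n) × Fin (2 * n))}
    {a b c d : Fin (2 * n)} (h : DistE is ((a, d) :: (b, c) :: r)) :
    DistE is ((a, c) :: (b, d) :: r) ∧ DistE is ((a, b) :: (c, d) :: r) := by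
  obtain ⟨h1, h2, h3⟩ := h
  rw [List.pairwise_cons] at h3
  obtain ⟨hx, h3⟩ := h3
  rw [List.pairwise_cons] at h3
  obtain ⟨hyr, hr⟩ := h3
  have hxr : ∀ z ∈ r, RD (a, d) z := fun z hz => hx z (by simp [hz])
  obtain ⟨hab', hac', hdb, hdc⟩ : RD (a, d) (b, c) := hx _ (by simp)
  obtain ⟨had, hais, hdis⟩ := h2 (a, d) (by simp)
  obtain ⟨hbc, hbis, hcis⟩ := h2 (b, c) (by simp)
  have h2r : ∀ z ∈ r, z.1 ≠ z.2 ∧ z.1 ∉ is ∧ z.2 ∉ is := fun z hz => h2 z (by simp [hz])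
  constructor
  · refine ⟨h1, ?_, ?_⟩
    · intro z hz
      rcases List.mem_cons.1 hz with rfl | hz
      · exact ⟨hac', hais, hcis⟩
      rcases List.mem_cons.1 hz with rfl | hz
      · exact ⟨hdb.symm, hbis, hdis⟩
      · exact h2r z hz
    · rw [List.pairwise_cons]
      refine ⟨?_, ?_⟩
      · intro z hz
        rcases List.mem_cons.1 hz with rfl | hz
        · exact ⟨hab', had, hbc.symm, hdc.symm⟩
        · exact ⟨(hxr z hz).1, (hxr z hz).2.1, (hyr z hz).2.2.1, (hyr z hz).2.2.2⟩
      · rw [List.pairwise_cons]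
        exact ⟨fun z hz => ⟨(hyr z hz).1, (hyr z hz).2.1, (hxr z hz).2.2.1, (hxr z hz).2.2.2⟩, hr⟩
  · refine ⟨h1, ?_, ?_⟩
    · intro z hz
      rcases List.mem_cons.1 hz with rfl | hz
      · exact ⟨hab', hais, hbis⟩
      rcases List.mem_cons.1 hz with rfl | hz
      · exact ⟨hdc.symm, hcis, hdis⟩
      · exact h2r z hz
    · rw [List.pairwise_cons]
      refine ⟨?_, ?_⟩
      · intro z hz
        rcases List.mem_cons.1 hz with rfl | hz
        · exact ⟨hac', had, hbc, hdb.symm⟩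
        · exact ⟨(hxr z hz).1, (hxr z hz).2.1, (hyr z hz).1, (hyr z hz).2.1⟩
      · rw [List.pairwise_cons]
        exact ⟨fun z hz => ⟨(hyr z hz).2.2.1, (hyr z hz).2.2.2, (hxr z hz).2.2.1,
          (hxr z hz).2.2.2⟩, hr⟩



theorem main_span {n : ℕ} :
    ∀ (N : ℕ) (is : List (Fin (2 * n))) (ps : List (Fin (2 * n) × Fin (2 * n))),
    mu ps ≤ N → is.length + ps.length = n → DistE is ps →
    TT n is ps ∈ Submodule.span ℚ (Set.range (gzMonomial n)) := by
  intro N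
  induction N using Nat.strong_induction_on with
  | _ N IH =>
  intro is ps hmu hlen hdist
  classical
  -- Step 1 : normalize each pair so that fst < snd
  set nrm : Fin (2 * n) × Fin (2 * n) → Fin (2 * n) × Fin (2 * n) :=
    fun x => if x.1 < x.2 then x else (x.2, x.1) with hnrm
  have hcomp : ∀ y : Fin (2 * n) × Fin (2 * n),
      ((nrm y).1 = y.1 ∧ (nrm y).2 = y.2) ∨ ((nrm y).1 = y.2 ∧ (nrm y).2 = y.1) := by
    intro y; by_cases h : y.1 < y.2 <;> simp [hnrm, h]
  set ps1 := ps.map nrm with hps1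
  have hmap1 : ps1.map (egDp n) = ps.map (egDp n) := by
    rw [hps1, List.map_map]
    congr 1
    funext x
    by_cases h : x.1 < x.2
    · simp [hnrm, h, Function.comp]
    · simp only [Function.comp_apply, hnrm, if_neg h, egDp]
      exact (egD_symm x.1 x.2).symm
  have hmu1 : mu ps1 = mu ps := by
    rw [hps1, mu, List.map_map, mu]
    congr 1
    apply List.map_congr_left
    intro x _
    by_cases h : x.1 < x.2
    · simp [hnrm, h]
    · simp only [Function.comp_apply, hnrm, if_neg h, muP]
      exact add_comm _ _
  have hdist1 : DistE is ps1 := by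
    refine ⟨hdist.1, ?_, ?_⟩
    · intro x hx
      obtain ⟨y, hy, rfl⟩ := List.mem_map.1 hx
      obtain ⟨hy1, hy2, hy3⟩ := hdist.2.1 y hy
      rcases hcomp y with ⟨e1, e2⟩ | ⟨e1, e2⟩ <;> rw [e1, e2]
      · exact ⟨hy1, hy2, hy3⟩
      · exact ⟨hy1.symm, hy3, hy2⟩
    · rw [hps1, List.pairwise_map]
      refine hdist.2.2.imp ?_
      intro x y hxy
      obtain ⟨r1, r2, r3, r4⟩ := hxy
      rcases hcomp x with ⟨e1, e2⟩ | ⟨e1, e2⟩ <;> rcases hcomp y with ⟨f1, f2⟩ | ⟨f1, f2⟩ <;>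
        (refine ⟨?_, ?_, ?_, ?_⟩ <;> simp only [e1, e2, f1, f2] <;>
          first
            | exact r1
            | exact r2
            | exact r3
            | exact r4
            | exact r1.symm
            | exact r2.symm
            | exact r3.symm
            | exact r4.symm)
  have hlt1 : ∀ x ∈ ps1, x.1 < x.2 := by
    intro x hx
    obtain ⟨y, hy, rfl⟩ := List.mem_map.1 hx
    have hne := (hdist.2.1 y hy).1
    by_cases h : y.1 < y.2
    · simpa [hnrm, h] using h
    · have : y.2 < y.1 := lt_of_le_of_ne (not_lt.1 h) (Ne.symm hne)
      simpa [hnrm, h] using this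
  have hlen1 : is.length + ps1.length = n := by rwa [hps1, List.length_map]
  -- Step 2 : sort the pairs by first coordinate
  set le2 : (Fin (2 * n) × Fin (2 * n)) → (Fin (2 * n) × Fin (2 * n)) → Bool :=
    fun x y => decide (x.1 ≤ y.1) with hle2
  set ps2 := ps1.mergeSort le2 with hps2
  have hperm2 : ps2 ~ ps1 := List.mergeSort_perm ps1 le2
  have hsorted : ps2.Pairwise (fun x y => x.1 ≤ y.1) := by
    have := List.pairwise_mergeSort (le := le2)
      (fun a b c h1 h2 => by
        simp only [hle2, decide_eq_true_eq] at h1 h2 ⊢; exact le_trans h1 h2)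
      (fun a b => by
        simp only [hle2, Bool.or_eq_true, decide_eq_true_eq]; exact le_total _ _) ps1
    exact this.imp (fun h => by simpa [hle2] using h)
  have hdist2 : DistE is ps2 := DistE_perm hperm2.symm hdist1
  have hlt2 : ∀ x ∈ ps2, x.1 < x.2 := fun x hx => hlt1 x (hperm2.mem_iff.1 hx)
  have hmu2 : mu ps2 = mu ps := by rw [mu, List.Perm.sum_eq (hperm2.map muP), ← mu, hmu1]
  have hlen2 : is.length + ps2.length = n := by rwa [hperm2.length_eq]
  have hfstlt : ps2.Pairwise (fun x y => x.1 < y.1) := by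
    have hne : ps2.Pairwise (fun x y => x.1 ≠ y.1) := hdist2.2.2.imp (fun h => h.1)
    exact (hsorted.and hne).imp (fun h => lt_of_le_of_ne h.1 h.2)
  have hTT2 : TT n is ps = TT n is ps2 := by
    have h1 : TT n is ps = TT n is ps1 := by unfold TT; rw [hmap1]
    rw [h1]
    exact TT_perm (List.Perm.refl is) hperm2.symm
  rw [hTT2]
  by_cases hc : List.Chain' (fun x y : Fin (2 * n) × Fin (2 * n) => x.2 < y.2) ps2
  · -- Gelfand–Zetlin case
    haveI : IsTrans (Fin (2 * n) × Fin (2 * n)) (fun x y => x.2 < y.2) :=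
      ⟨fun _ _ _ h1 h2 => lt_trans h1 h2⟩
    have hsnd : ps2.Pairwise (fun x y => x.2 < y.2) := List.isChain_iff_pairwise.1 hc
    set is2 := is.mergeSort (fun a b => decide (a ≤ b)) with his2
    have hpermis : is2 ~ is := List.mergeSort_perm is _
    have hsortis : is2.Pairwise (· ≤ ·) := by
      have := List.pairwise_mergeSort (le := fun a b : Fin (2 * n) => decide (a ≤ b))
        (fun a b c h1 h2 => by
          simp only [decide_eq_true_eq] at h1 h2 ⊢; exact le_trans h1 h2)
        (fun a b => by
          simp only [Bool.or_eq_true, decide_eq_true_eq]; exact le_total _ _) is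
      exact this.imp (fun h => by simpa using h)
    have hsortis' : is2.Pairwise (· < ·) := (hsortis.sortedLE.sortedLT_of_nodup (hpermis.nodup_iff.2 hdist.1)).pairwise
    have e3 : TT n is ps2 = TT n is2 ps2 := TT_perm hpermis.symm (List.Perm.refl ps2)
    rw [e3]
    refine Submodule.subset_span (gz_case is2 ps2 ?_ hsortis' hfstlt hsnd hlt2
      (DistE_permL hpermis.symm hdist2))
    rwa [hpermis.length_eq]
  · -- a nested pair : apply the Plücker relation and induct
    obtain ⟨l1, x, y, l2, hdec, hxy⟩ := not_chain'_decomp ps2 hc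
    have hsubxy : [x, y] <+ ps2 := by
      rw [hdec]
      exact ((List.Sublist.cons₂ y (List.nil_sublist l2)).cons₂ x).trans
        (List.sublist_append_right l1 _)
    have hfstxy : x.1 < y.1 := by
      have := (hfstlt.sublist hsubxy)
      rw [List.pairwise_cons] at this
      exact this.1 y (by simp)
    have hRDxy : RD x y := by
      have := (hdist2.2.2.sublist hsubxy)
      rw [List.pairwise_cons] at this
      exact this.1 y (by simp)
    have hxmem : x ∈ ps2 := hsubxy.subset (by simp)
    have hymem : y ∈ ps2 := hsubxy.subset (by simp)
    have had : x.1 < x.2 := hlt2 x hxmem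
    have hbc : y.1 < y.2 := hlt2 y hymem
    have hcd : y.2 < x.2 := lt_of_le_of_ne (not_lt.1 hxy) (Ne.symm hRDxy.2.2.2)
    have hpermv : ps2 ~ x :: y :: (l1 ++ l2) := by
      rw [hdec]
      exact List.perm_middle.trans ((List.Perm.cons x) List.perm_middle)
    have e2 : TT n is ps2 = TT n is (x :: y :: (l1 ++ l2)) :=
      TT_perm (List.Perm.refl is) hpermv
    have e3 : TT n is (x :: y :: (l1 ++ l2)) =
        -(TT n is ((x.1, y.2) :: (y.1, x.2) :: (l1 ++ l2))) -
          TT n is ((x.1, y.1) :: (y.2, x.2) :: (l1 ++ l2)) :=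
      TT_plucker is (l1 ++ l2) x.1 y.1 y.2 x.2
    rw [e2, e3]
    have hdistv : DistE is (x :: y :: (l1 ++ l2)) := DistE_perm hpermv hdist2
    have hdistv' : DistE is ((x.1, y.2) :: (y.1, x.2) :: (l1 ++ l2)) ∧
        DistE is ((x.1, y.1) :: (y.2, x.2) :: (l1 ++ l2)) := DistE_plucker hdistv
    have hmuv : mu ps2 = muP x + (muP y + mu (l1 ++ l2)) := by
      rw [mu, List.Perm.sum_eq (hpermv.map muP)]
      simp [mu]
    have hlenps2 : ps2.length = ps.length := by
      rw [hperm2.length_eq, hps1, List.length_map]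
    have hlenr : ps2.length = 2 + (l1 ++ l2).length := by
      rw [hpermv.length_eq]; simp; omega
    have h3A : muP (x.1, y.2) + muP (y.1, x.2) < muP x + muP y :=
      mu_ineq1 hfstxy hbc hcd
    have h3B : muP (x.1, y.1) + muP (y.2, x.2) < muP x + muP y :=
      mu_ineq2 hfstxy hbc hcd
    have h2A : mu ((x.1, y.2) :: (y.1, x.2) :: (l1 ++ l2)) =
        muP (x.1, y.2) + (muP (y.1, x.2) + mu (l1 ++ l2)) := by simp [mu]
    have h2B : mu ((x.1, y.1) :: (y.2, x.2) :: (l1 ++ l2)) =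
        muP (x.1, y.1) + (muP (y.2, x.2) + mu (l1 ++ l2)) := by simp [mu]
    have hlA : is.length + ((x.1, y.2) :: (y.1, x.2) :: (l1 ++ l2)).length = n := by
      simp only [List.length_cons]
      omega
    have hlB : is.length + ((x.1, y.1) :: (y.2, x.2) :: (l1 ++ l2)).length = n := by
      simp only [List.length_cons]
      omega
    refine Submodule.sub_mem _ (Submodule.neg_mem _ ?_) ?_
    · exact IH (mu ((x.1, y.2) :: (y.1, x.2) :: (l1 ++ l2))) (by omega) is _
        (le_refl _) hlA hdistv'.1
    · exact IH (mu ((x.1, y.1) :: (y.2, x.2) :: (l1 ++ l2))) (by omega) is _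
        (le_refl _) hlB hdistv'.2

end EGAux

/-- Every product `P_{i₁} ∧ ⋯ ∧ P_{i_p} ∧ D_{j₁k₁} ∧ ⋯ ∧ D_{j_qk_q}` with
`p + q = n` and pairwise distinct indices lies in the `ℚ`-linear span of the Gelfand–Zetlin
monomials (the cohomological realization of `LZⁿ(E^{2n}, 0) = S + T`, Lemma 3.4). -/
theorem monomial_mem_span_gzMonomial (n : ℕ) (hn : 0 < n) (p q : ℕ) (hpq : p + q = n)
    (i : Fin p → Fin (2 * n)) (j k : Fin q → Fin (2 * n))
    (hdistinct : Function.Injective (Sum.elim i (Sum.elim j k))) :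
    (List.ofFn fun r : Fin p => egP n (i r)).prod *
        (List.ofFn fun r : Fin q => egD n (j r) (k r)).prod ∈
      Submodule.span ℚ (Set.range (gzMonomial n)) := by
  classical
  set is : List (Fin (2 * n)) := List.ofFn i with his
  set ps : List (Fin (2 * n) × Fin (2 * n)) := List.ofFn (fun r => (j r, k r)) with hps
  have hrw : (List.ofFn fun r : Fin p => egP n (i r)).prod *
      (List.ofFn fun r : Fin q => egD n (j r) (k r)).prod = EGAux.TT n is ps := by
    unfold EGAux.TT
    rw [his, hps, List.map_ofFn, List.map_ofFn]
    rfl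
  rw [hrw]
  refine EGAux.main_span (EGAux.mu ps) is ps (le_refl _) ?_ ?_
  · rw [his, hps, List.length_ofFn, List.length_ofFn]
    exact hpq
  · have hii : Function.Injective i := fun r s h => by
      have := hdistinct (a₁ := Sum.inl r) (a₂ := Sum.inl s) h
      exact Sum.inl.inj this
    refine ⟨?_, ?_, ?_⟩
    · rw [his]; exact List.nodup_ofFn.2 hii
    · intro x hx
      rw [hps] at hx
      obtain ⟨r, rfl⟩ := List.mem_ofFn.1 hx
      refine ⟨?_, ?_, ?_⟩
      · intro h
        have := hdistinct (a₁ := Sum.inr (Sum.inl r)) (a₂ := Sum.inr (Sum.inr r)) h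
        simp at this
      · intro hm
        rw [his] at hm
        obtain ⟨s, hs⟩ := List.mem_ofFn.1 hm
        have := hdistinct (a₁ := Sum.inl s) (a₂ := Sum.inr (Sum.inl r)) hs
        simp at this
      · intro hm
        rw [his] at hm
        obtain ⟨s, hs⟩ := List.mem_ofFn.1 hm
        have := hdistinct (a₁ := Sum.inl s) (a₂ := Sum.inr (Sum.inr r)) hs
        simp at this
    · rw [hps]
      refine List.pairwise_ofFn.2 ?_
      intro r s hrs
      have hne : r ≠ s := ne_of_lt hrs
      refine ⟨?_, ?_, ?_, ?_⟩
      · intro h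
        have := hdistinct (a₁ := Sum.inr (Sum.inl r)) (a₂ := Sum.inr (Sum.inl s)) h
        simp only [Sum.inr.injEq, Sum.inl.injEq] at this
        exact hne this
      · intro h
        have := hdistinct (a₁ := Sum.inr (Sum.inl r)) (a₂ := Sum.inr (Sum.inr s)) h
        simp at this
      · intro h
        have := hdistinct (a₁ := Sum.inr (Sum.inr r)) (a₂ := Sum.inr (Sum.inl s)) h
        simp at this
      · intro h
        have := hdistinct (a₁ := Sum.inr (Sum.inr r)) (a₂ := Sum.inr (Sum.inr s)) h
        simp only [Sum.inr.injEq] at this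
        exact hne this
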